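/- For every natural number n, every natural number k, and all real numbers p1, p2 with 0 ≤ p1 ≤ p2 ≤ 1, the binomial cumulative distribution function is pointwise nonincreasing in the success probability: ∑_{j=0}^{k} C(n,j)·p1^j·(1−p1)^{n−j} ≥ ∑_{j=0}^{k} C(n,j)·p2^j·(1−p2)^{n−j}. -/

import Mathlib

open Finset

private lemma natA (n k : ℕ) : (k + 1) * n.choose (k + 1) = n * (n - 1).choose k := by
  cases n with
  | zero => simp
  | succ m =>
    have := Nat.add_one_mul_choose_eq m k
    simpa [Nat.succ_eq_add_one, mul_comm] using this.symm

private lemma natB (n j : ℕ) : (n - j) * n.choose j = n * (n - 1).choose j := by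
  cases n with
  | zero => simp
  | succ m =>
    have := Nat.choose_mul_succ_eq m j
    simpa [Nat.succ_sub_one, mul_comm] using this.symm

private lemma sumD (n k : ℕ) (p : ℝ) :
    ∑ j ∈ range (k + 1), (n.choose j : ℝ) *
        ((j : ℝ) * p ^ (j - 1) * (1 - p) ^ (n - j) +
          p ^ j * (((n - j : ℕ) : ℝ) * (1 - p) ^ (n - j - 1) * (-1)))
      = -((n : ℝ) * ((n - 1).choose k : ℝ) * p ^ k * (1 - p) ^ (n - 1 - k)) := by
  induction k with
  | zero =>
    rw [Finset.sum_range_one]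
    simp
  | succ k ih =>
    rw [Finset.sum_range_succ, ih]
    have e1 : n - (k + 1) = n - 1 - k := by omega
    have e2 : n - (k + 1) - 1 = n - 1 - (k + 1) := by omega
    have hA : ((k : ℝ) + 1) * (n.choose (k + 1) : ℝ) = (n : ℝ) * ((n - 1).choose k : ℝ) := by
      exact_mod_cast natA n k
    have hB : (((n - (k + 1) : ℕ)) : ℝ) * (n.choose (k + 1) : ℝ)
        = (n : ℝ) * ((n - 1).choose (k + 1) : ℝ) := by
      exact_mod_cast natB n (k + 1)
    rw [e1, e2] at *
    push_cast
    linear_combination (p ^ k * (1 - p) ^ (n - 1 - k)) * hA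
      - (p ^ (k + 1) * (1 - p) ^ (n - 1 - (k + 1))) * hB

private lemma hd (n k : ℕ) (p : ℝ) :
    HasDerivAt (fun x : ℝ => ∑ j ∈ range (k + 1), (n.choose j : ℝ) * x ^ j * (1 - x) ^ (n - j))
      (-((n : ℝ) * ((n - 1).choose k : ℝ) * p ^ k * (1 - p) ^ (n - 1 - k))) p := by
  rw [← sumD n k p]
  apply HasDerivAt.fun_sum
  intro j _
  have h1 : HasDerivAt (fun x : ℝ => 1 - x) (-1) p := (hasDerivAt_id p).const_sub 1
  have hq : HasDerivAt (fun x : ℝ => (1 - x) ^ (n - j))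
      ((((n - j : ℕ) : ℝ) * (1 - p) ^ (n - j - 1)) * (-1)) p :=
    (hasDerivAt_pow (n - j) (1 - p)).comp p h1
  have hp : HasDerivAt (fun x : ℝ => (n.choose j : ℝ) * x ^ j)
      ((n.choose j : ℝ) * ((j : ℝ) * p ^ (j - 1))) p := (hasDerivAt_pow j p).const_mul _
  have := hp.fun_mul hq
  refine this.congr_deriv ?_
  ring

/-- The binomial cumulative distribution function is pointwise nonincreasing
in the success probability. -/
theorem binomial_cdf_antitone_in_p (n k : ℕ) (p1 p2 : ℝ)
    (h1 : 0 ≤ p1) (h12 : p1 ≤ p2) (h2 : p2 ≤ 1) :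
    ∑ j ∈ Finset.range (k + 1), (n.choose j : ℝ) * p1 ^ j * (1 - p1) ^ (n - j) ≥
      ∑ j ∈ Finset.range (k + 1), (n.choose j : ℝ) * p2 ^ j * (1 - p2) ^ (n - j) := by
  have hant : AntitoneOn
      (fun x : ℝ => ∑ j ∈ range (k + 1), (n.choose j : ℝ) * x ^ j * (1 - x) ^ (n - j))
      (Set.Icc 0 1) := by
    apply antitoneOn_of_deriv_nonpos (convex_Icc 0 1)
    · apply Continuous.continuousOn
      fun_prop
    · intro x _
      exact (hd n k x).differentiableAt.differentiableWithinAt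
    · intro x hx
      rw [interior_Icc, Set.mem_Ioo] at hx
      rw [(hd n k x).deriv]
      have : (0 : ℝ) ≤ (n : ℝ) * ((n - 1).choose k : ℝ) * x ^ k * (1 - x) ^ (n - 1 - k) := by
        apply mul_nonneg
        apply mul_nonneg
        apply mul_nonneg
        · positivity
        · positivity
        · exact pow_nonneg hx.1.le _
        · exact pow_nonneg (by linarith [hx.2]) _
      linarith
  exact hant ⟨h1, h12.trans h2⟩ ⟨h1.trans h12, h2⟩ h12
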